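/- arXiv:1509.03925 — 4 statements merged into one kernel-verified Lean document; each statement's English description precedes it below -/
import Mathlib

section
/- If A is an m×m doubly stochastic matrix and x_1,...,x_m ∈ ℝ^n, then setting v_i = ∑_j A_{ij} x_j, for any c ∈ ℝ^n one has ∑_i ‖v_i − c‖² = ∑_j ‖x_j − c‖² − (1/2) ∑_j ∑_ℓ ∑_i A_{ij} A_{iℓ} ‖x_j − x_ℓ‖². -/
theorem stmt2 {n m : ℕ} (A : Fin m → Fin m → ℝ)
    (hnonneg : ∀ i j, 0 ≤ A i j)
    (hrow : ∀ i, ∑ j, A i j = 1) (hcol : ∀ j, ∑ i, A i j = 1)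
    (x : Fin m → EuclideanSpace ℝ (Fin n)) (c : EuclideanSpace ℝ (Fin n)) :
    ∑ i, ‖(∑ j, A i j • x j) - c‖ ^ 2 =
      ∑ j, ‖x j - c‖ ^ 2
        - (1 / 2) * ∑ j, ∑ l, ∑ i, A i j * A i l * ‖x j - x l‖ ^ 2 := by
  set y : Fin m → EuclideanSpace ℝ (Fin n) := fun j => x j - c with hy
  have hv : ∀ i, (∑ j, A i j • x j) - c = ∑ j, A i j • y j := by
    intro i
    have h1 : (∑ j, A i j • y j) = (∑ j, A i j • x j) - (∑ j, A i j) • c := by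
      rw [Finset.sum_smul, ← Finset.sum_sub_distrib]
      exact Finset.sum_congr rfl fun j _ => by simp [hy, smul_sub]
    rw [h1, hrow, one_smul]
  have hnorm : ∀ i, ‖∑ j, A i j • y j‖ ^ 2
      = ∑ j, ∑ l, A i j * A i l * (inner ℝ (y j) (y l) : ℝ) := by
    intro i
    rw [← real_inner_self_eq_norm_sq, sum_inner]
    refine Finset.sum_congr rfl fun j _ => ?_
    rw [inner_sum]
    refine Finset.sum_congr rfl fun l _ => ?_
    rw [real_inner_smul_left, real_inner_smul_right]; ring
  have hdiff : ∀ j l, ‖x j - x l‖ ^ 2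
      = ‖y j‖ ^ 2 - 2 * (inner ℝ (y j) (y l) : ℝ) + ‖y l‖ ^ 2 := by
    intro j l
    have : x j - x l = y j - y l := by simp [hy]
    rw [this, @norm_sub_sq_real]
  simp only [hv, hnorm, hdiff]; simp only [hy]
  have key1 : ∀ (C : ℝ) (j : Fin m), ∑ l, ∑ i, A i j * A i l * C = C := by
    intro C j
    rw [Finset.sum_comm]
    have h1 : ∀ i, ∑ l, A i j * A i l * C = A i j * C := by
      intro i
      have : ∑ l, A i j * A i l * C = (A i j * C) * ∑ l, A i l := by
        rw [Finset.mul_sum]; exact Finset.sum_congr rfl fun l _ => by ring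
      rw [this, hrow, mul_one]
    rw [Finset.sum_congr rfl fun i _ => h1 i, ← Finset.sum_mul, hcol, one_mul]
  have key2 : ∀ (C : ℝ) (l : Fin m), ∑ j, ∑ i, A i j * A i l * C = C := by
    intro C l
    rw [Finset.sum_comm]
    have h1 : ∀ i, ∑ j, A i j * A i l * C = A i l * C := by
      intro i
      have : ∑ j, A i j * A i l * C = (A i l * C) * ∑ j, A i j := by
        rw [Finset.mul_sum]; exact Finset.sum_congr rfl fun j _ => by ring
      rw [this, hrow, mul_one]
    rw [Finset.sum_congr rfl fun i _ => h1 i, ← Finset.sum_mul, hcol, one_mul]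
  -- split the triple sum
  have hsplit : ∑ j, ∑ l, ∑ i, A i j * A i l *
        (‖x j - c‖ ^ 2 - 2 * (inner ℝ (x j - c) (x l - c) : ℝ) + ‖x l - c‖ ^ 2)
      = (∑ j, ‖x j - c‖ ^ 2) + (∑ l, ‖x l - c‖ ^ 2)
        - 2 * ∑ i, ∑ j, ∑ l, A i j * A i l * (inner ℝ (x j - c) (x l - c) : ℝ) := by
    have expand : ∀ i j l, A i j * A i l *
          (‖x j - c‖ ^ 2 - 2 * (inner ℝ (x j - c) (x l - c) : ℝ) + ‖x l - c‖ ^ 2)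
        = A i j * A i l * ‖x j - c‖ ^ 2
          - 2 * (A i j * A i l * (inner ℝ (x j - c) (x l - c) : ℝ))
          + A i j * A i l * ‖x l - c‖ ^ 2 := fun i j l => by ring
    simp only [expand, Finset.sum_add_distrib, Finset.sum_sub_distrib, ← Finset.mul_sum]
    rw [Finset.sum_congr rfl fun j _ => key1 (‖x j - c‖ ^ 2) j]
    have h2 : ∑ j, ∑ l, ∑ i, A i j * A i l * ‖x l - c‖ ^ 2
        = ∑ l, ‖x l - c‖ ^ 2 := by
      rw [Finset.sum_comm]
      exact Finset.sum_congr rfl fun l _ => key2 (‖x l - c‖ ^ 2) l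
    rw [h2]
    have h3 : ∑ j, ∑ l, ∑ i, A i j * A i l * (inner ℝ (x j - c) (x l - c) : ℝ)
        = ∑ i, ∑ j, ∑ l, A i j * A i l * (inner ℝ (x j - c) (x l - c) : ℝ) := by
      calc ∑ j, ∑ l, ∑ i, A i j * A i l * (inner ℝ (x j - c) (x l - c) : ℝ)
          = ∑ j, ∑ i, ∑ l, A i j * A i l * (inner ℝ (x j - c) (x l - c) : ℝ) :=
            Finset.sum_congr rfl fun j _ => Finset.sum_comm
        _ = ∑ i, ∑ j, ∑ l, A i j * A i l * (inner ℝ (x j - c) (x l - c) : ℝ) :=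
            Finset.sum_comm

    rw [h3]; ring
  rw [hsplit]; ring
end

section
/- Let h : ℝ^p → ℝ be differentiable, strongly convex with parameter κ > 0 on a closed convex set Θ, with ∇h Lipschitz with constant R on Θ. Let θ* minimize h over Θ. Then for any θ ∈ Θ, any γ > 0, and any vector β, setting θ⁺ = Π_Θ(θ − γ(∇h(θ) + β)), one has ‖θ⁺ − θ*‖² ≤ (1 − 2γκ + γ²R²)‖θ − θ*‖² + γ²‖β‖² − 2γ⟨β, θ − θ* − γ(∇h(θ) − ∇h(θ*))⟩. -/
set_option maxHeartbeats 800000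

open Filter Topology Set

theorem stmt5 {p : ℕ} (Θ : Set (EuclideanSpace ℝ (Fin p)))
    (hΘclosed : IsClosed Θ) (hΘconv : Convex ℝ Θ)
    (h : EuclideanSpace ℝ (Fin p) → ℝ)
    (gradh : EuclideanSpace ℝ (Fin p) → EuclideanSpace ℝ (Fin p))
    (hgrad : ∀ θ, HasGradientAt h (gradh θ) θ)
    (κ R : ℝ) (hκ : 0 < κ)
    (hstrong : ∀ a ∈ Θ, ∀ b ∈ Θ, κ * ‖a - b‖ ^ 2 ≤ (inner ℝ (gradh a - gradh b) (a - b) : ℝ))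
    (hlip : ∀ a ∈ Θ, ∀ b ∈ Θ, ‖gradh a - gradh b‖ ≤ R * ‖a - b‖)
    (θstar : EuclideanSpace ℝ (Fin p)) (hθstar : θstar ∈ Θ)
    (hmin : ∀ θ ∈ Θ, h θstar ≤ h θ)
    (θ : EuclideanSpace ℝ (Fin p)) (hθ : θ ∈ Θ)
    (γ : ℝ) (hγ : 0 < γ) (β : EuclideanSpace ℝ (Fin p))
    (θplus : EuclideanSpace ℝ (Fin p)) (hplusmem : θplus ∈ Θ)
    (hproj : ∀ y ∈ Θ, ‖(θ - γ • (gradh θ + β)) - θplus‖ ≤ ‖(θ - γ • (gradh θ + β)) - y‖) :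
    ‖θplus - θstar‖ ^ 2 ≤ (1 - 2 * γ * κ + γ ^ 2 * R ^ 2) * ‖θ - θstar‖ ^ 2
      + γ ^ 2 * ‖β‖ ^ 2
      - 2 * γ * (inner ℝ β (θ - θstar - γ • (gradh θ - gradh θstar)) : ℝ) := by
  -- variational inequality at the minimizer
  have varineq : ∀ y ∈ Θ, (0:ℝ) ≤ inner ℝ (gradh θstar) (y - θstar) := by
    intro y hy
    set v := y - θstar with hv
    have hc : HasDerivAt (fun t : ℝ => θstar + t • v) v 0 := by
      simpa using ((hasDerivAt_id (0:ℝ)).smul_const v).const_add θstar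
    have hf : HasDerivAt (fun t : ℝ => h (θstar + t • v))
        (inner ℝ (gradh θstar) v : ℝ) 0 := by
      have hg : HasFDerivAt h ((InnerProductSpace.toDual ℝ _) (gradh θstar))
          (θstar + (0:ℝ) • v) := by simpa using (hgrad θstar).hasFDerivAt
      have := hg.comp_hasDerivAt (x := (0:ℝ))
        (f := fun t : ℝ => θstar + t • v) hc
      simp [InnerProductSpace.toDual_apply_apply] at this
      exact this
    have hfW : HasDerivWithinAt (fun t : ℝ => h (θstar + t • v))
        (inner ℝ (gradh θstar) v : ℝ) (Ioi (0:ℝ)) 0 := hf.hasDerivWithinAt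
    rw [hasDerivWithinAt_iff_tendsto_slope] at hfW
    have hdiff : Ioi (0:ℝ) \ {0} = Ioi 0 := by
      apply Set.diff_singleton_eq_self; simp
    rw [hdiff] at hfW
    refine ge_of_tendsto hfW ?_
    have h1 : ∀ᶠ t in 𝓝[Ioi (0:ℝ)] 0, t < 1 :=
      mem_nhdsWithin_of_mem_nhds (Iio_mem_nhds one_pos)
    filter_upwards [h1, self_mem_nhdsWithin] with t ht1 ht0
    have ht0' : (0:ℝ) < t := ht0
    have hmem : θstar + t • v ∈ Θ := by
      have := hΘconv hθstar hy (by linarith : (0:ℝ) ≤ 1 - t) (le_of_lt ht0') (by ring)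
      convert this using 1
      rw [hv]; module
    have hge : h θstar ≤ h (θstar + t • v) := hmin _ hmem
    rw [slope_def_field]
    simp only [sub_zero, zero_smul, add_zero]
    apply div_nonneg _ ht0'.le
    linarith
  set x := θ - γ • (gradh θ + β) with hx
  -- projection characterization
  haveI : Nonempty Θ := ⟨⟨θplus, hplusmem⟩⟩
  have hchar : ∀ w ∈ Θ, (inner ℝ (x - θplus) (w - θplus) : ℝ) ≤ 0 := by
    rw [← norm_eq_iInf_iff_real_inner_le_zero hΘconv hplusmem]
    refine le_antisymm (le_ciInf fun w => hproj w w.2) ?_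
    have hbdd : BddBelow (Set.range fun w : Θ => ‖x - (w : EuclideanSpace ℝ (Fin p))‖) := by
      refine ⟨0, ?_⟩
      rintro _ ⟨w, rfl⟩
      exact norm_nonneg _
    exact ciInf_le hbdd ⟨θplus, hplusmem⟩
  have hA : (inner ℝ (x - θplus) (θstar - θplus) : ℝ) ≤ 0 := hchar θstar hθstar
  have hB : (0:ℝ) ≤ inner ℝ (gradh θstar) (θplus - θstar) := varineq θplus hplusmem
  set d := θplus - θstar with hd
  set xs := θstar - γ • gradh θstar with hxs
  -- nonexpansiveness
  have hkey : ‖d‖ ^ 2 ≤ (inner ℝ (x - xs) d : ℝ) := by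
    have h1 : (inner ℝ (x - xs - d) d : ℝ) ≥ 0 := by
      have e1 : x - xs - d = (x - θplus) + γ • gradh θstar := by
        rw [hd, hxs]; module
      rw [e1, inner_add_left, real_inner_smul_left]
      have t1 : (inner ℝ (x - θplus) d : ℝ) = -(inner ℝ (x - θplus) (θstar - θplus) : ℝ) := by
        rw [hd, ← inner_neg_right]; congr 1; module
      nlinarith [hB]
    have : (inner ℝ (d : EuclideanSpace ℝ (Fin p)) d : ℝ) = ‖d‖ ^ 2 :=
      real_inner_self_eq_norm_sq d
    have e2 : (inner ℝ (x - xs) d : ℝ) = (inner ℝ (x - xs - d) d : ℝ) + (inner ℝ (d:EuclideanSpace ℝ (Fin p)) d : ℝ) := by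
      rw [← inner_add_left]; congr 1; module
    linarith
  have hnorm : ‖d‖ ≤ ‖x - xs‖ := by
    rcases eq_or_lt_of_le (norm_nonneg d) with h0 | h0
    · rw [← h0]; exact norm_nonneg _
    · have := le_trans hkey (real_inner_le_norm (x - xs) d)
      have h2 : ‖d‖ * ‖d‖ ≤ ‖x - xs‖ * ‖d‖ := by nlinarith
      exact le_of_mul_le_mul_right h2 h0
  -- algebra
  set u := θ - θstar - γ • (gradh θ - gradh θstar) with hu
  have hxxs : x - xs = u - γ • β := by rw [hx, hxs, hu]; module
  have hexp : ‖x - xs‖ ^ 2 = ‖u‖ ^ 2 + γ ^ 2 * ‖β‖ ^ 2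
      - 2 * γ * (inner ℝ β u : ℝ) := by
    rw [hxxs, norm_sub_sq_real, real_inner_smul_right, real_inner_comm, norm_smul]
    simp [abs_of_pos hγ]
    ring
  set dg := gradh θ - gradh θstar with hdg
  have hu2 : ‖u‖ ^ 2 ≤ (1 - 2 * γ * κ + γ ^ 2 * R ^ 2) * ‖θ - θstar‖ ^ 2 := by
    have e3 : u = (θ - θstar) - γ • dg := by rw [hu, hdg]
    have hstr := hstrong θ hθ θstar hθstar
    have hl := hlip θ hθ θstar hθstar
    have hlsq : ‖dg‖ ^ 2 ≤ R ^ 2 * ‖θ - θstar‖ ^ 2 := by nlinarith [norm_nonneg dg]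
    rw [e3, norm_sub_sq_real, real_inner_smul_right, norm_smul]
    simp only [Real.norm_eq_abs, abs_of_pos hγ]
    have : (inner ℝ (θ - θstar) dg : ℝ) = inner ℝ dg (θ - θstar) := real_inner_comm _ _
    rw [this, hdg]
    nlinarith [hstr]
  have hub : (inner ℝ β (θ - θstar - γ • (gradh θ - gradh θstar)) : ℝ) = inner ℝ β u := by
    rw [hu]
  have hfinal : ‖d‖ ^ 2 ≤ ‖x - xs‖ ^ 2 := by
    nlinarith [norm_nonneg d, norm_nonneg (x - xs)]
  rw [hd] at hfinal
  rw [hub]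
  linarith [hexp ▸ hfinal, hu2]
end

section
/- Let X ⊆ ℝ^n be convex with a point x̄ and δ > 0 such that the closed ball B(x̄, δ) ⊆ X. Let x_1,...,x_m with x_j ∈ X_j where X_j are convex compact sets each containing X, with diameter of each X_j at most D. Let x̂ = (1/m)∑_j x_j. Then ∑_{j=1}^m ‖x_j − Π_X(x̂)‖ ≤ m(1 + mD/δ) · max_{j,ℓ} ‖x_j − x_ℓ‖. -/
theorem stmt13 {n m : ℕ} (hm : 0 < m)
    (Xs : Fin m → Set (EuclideanSpace ℝ (Fin n)))
    (hconv : ∀ j, Convex ℝ (Xs j)) (hcomp : ∀ j, IsCompact (Xs j))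
    (D : ℝ) (hD : ∀ j, ∀ a ∈ Xs j, ∀ b ∈ Xs j, ‖a - b‖ ≤ D)
    (xbar : EuclideanSpace ℝ (Fin n)) (δ : ℝ) (hδ : 0 < δ)
    (hball : Metric.closedBall xbar δ ⊆ ⋂ j, Xs j)
    (x : Fin m → EuclideanSpace ℝ (Fin n)) (hx : ∀ j, x j ∈ Xs j)
    (p : EuclideanSpace ℝ (Fin n)) (hp : p ∈ ⋂ j, Xs j)
    (hproj : ∀ z ∈ (⋂ j, Xs j),
      ‖(m : ℝ)⁻¹ • (∑ j, x j) - p‖ ≤ ‖(m : ℝ)⁻¹ • (∑ j, x j) - z‖) :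
    ∑ j, ‖x j - p‖ ≤ m * (1 + m * D / δ) * (⨆ j, ⨆ l, ‖x j - x l‖) := by
  have hmpos : (0:ℝ) < m := by exact_mod_cast hm
  haveI : Nonempty (Fin m) := ⟨⟨0, hm⟩⟩
  set xhat := (m:ℝ)⁻¹ • (∑ j, x j) with hxhatdef
  set M := ⨆ j, ⨆ l, ‖x j - x l‖ with hMdef
  have hbdd : ∀ j, BddAbove (Set.range fun l => ‖x j - x l‖) := fun j =>
    (Set.finite_range _).bddAbove
  have hbdd2 : BddAbove (Set.range fun j => ⨆ l, ‖x j - x l‖) :=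
    (Set.finite_range _).bddAbove
  have hMle : ∀ j l, ‖x j - x l‖ ≤ M := fun j l =>
    le_trans (le_ciSup (hbdd j) l) (le_ciSup hbdd2 j)
  have hM0 : 0 ≤ M := by
    have := hMle ⟨0, hm⟩ ⟨0, hm⟩; simpa using this
  have hD0 : 0 ≤ D := by
    have := hD ⟨0, hm⟩ _ (hx _) _ (hx _); simpa using this
  have hxbarmem : xbar ∈ ⋂ j, Xs j := hball (Metric.mem_closedBall_self hδ.le)
  have key : ∀ j, x j - xhat = (m:ℝ)⁻¹ • ∑ l, (x j - x l) := by
    intro j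
    rw [Finset.sum_sub_distrib, Finset.sum_const, Finset.card_univ, Fintype.card_fin,
      smul_sub, ← Nat.cast_smul_eq_nsmul ℝ, smul_smul, inv_mul_cancel₀ (ne_of_gt hmpos),
      one_smul]
  have hxhatj : ∀ j, ‖x j - xhat‖ ≤ M := by
    intro j
    rw [key j, norm_smul, Real.norm_eq_abs, abs_of_pos (by positivity)]
    calc (m:ℝ)⁻¹ * ‖∑ l, (x j - x l)‖
        ≤ (m:ℝ)⁻¹ * ∑ l, ‖x j - x l‖ := by
          exact mul_le_mul_of_nonneg_left (norm_sum_le _ _) (by positivity)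
      _ ≤ (m:ℝ)⁻¹ * ∑ _l : Fin m, M := by
          gcongr with l; exact hMle j l
      _ = M := by
          rw [Finset.sum_const, Finset.card_univ, Fintype.card_fin, nsmul_eq_mul]
          field_simp
  have hxhatbar : ‖xhat - xbar‖ ≤ D := by
    have keyb : xhat - xbar = (m:ℝ)⁻¹ • ∑ l, (x l - xbar) := by
      rw [Finset.sum_sub_distrib, Finset.sum_const, Finset.card_univ, Fintype.card_fin,
        smul_sub, ← Nat.cast_smul_eq_nsmul ℝ, smul_smul, inv_mul_cancel₀ (ne_of_gt hmpos),
        one_smul]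
    rw [keyb, norm_smul, Real.norm_eq_abs, abs_of_pos (by positivity)]
    calc (m:ℝ)⁻¹ * ‖∑ l, (x l - xbar)‖
        ≤ (m:ℝ)⁻¹ * ∑ l, ‖x l - xbar‖ := by
          exact mul_le_mul_of_nonneg_left (norm_sum_le _ _) (by positivity)
      _ ≤ (m:ℝ)⁻¹ * ∑ _l : Fin m, D := by
          gcongr with l
          exact hD l _ (hx l) _ (Set.mem_iInter.mp hxbarmem l)
      _ = D := by
          rw [Finset.sum_const, Finset.card_univ, Fintype.card_fin, nsmul_eq_mul]
          field_simp
  obtain ⟨z, hz, hzb⟩ : ∃ z ∈ ⋂ j, Xs j, ‖xhat - z‖ ≤ D * M / δ := by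
    rcases eq_or_lt_of_le hM0 with hMeq | hMpos
    · refine ⟨xhat, ?_, by simp [← hMeq]⟩
      refine Set.mem_iInter.mpr fun j => ?_
      have hxe : x j = xhat := by
        have h := hxhatj j
        rw [← hMeq] at h
        have := norm_le_zero_iff.mp h
        exact sub_eq_zero.mp this
      rw [← hxe]; exact hx j
    · set t := δ / (δ + M) with ht
      have hδM : (0:ℝ) < δ + M := by linarith
      have ht0 : 0 ≤ t := by positivity
      have ht1 : t ≤ 1 := by
        rw [ht, div_le_one hδM]; linarith
      refine ⟨xbar + t • (xhat - xbar), ?_, ?_⟩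
      · refine Set.mem_iInter.mpr fun j => ?_
        have hv : xbar + (δ/M) • (xhat - x j) ∈ Xs j := by
          refine Set.mem_iInter.mp (hball ?_) j
          rw [Metric.mem_closedBall, dist_eq_norm]
          have heq1 : xbar + (δ/M) • (xhat - x j) - xbar = (δ/M) • (xhat - x j) := by
            abel
          rw [heq1, norm_smul, Real.norm_eq_abs, abs_of_pos (by positivity)]
          have h1 : ‖xhat - x j‖ ≤ M := by rw [norm_sub_rev]; exact hxhatj j
          calc δ/M * ‖xhat - x j‖ ≤ δ/M * M := by gcongr
            _ = δ := div_mul_cancel₀ δ (ne_of_gt hMpos)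
        have hmem := (hconv j) hv (hx j) (by linarith : (0:ℝ) ≤ 1 - t) ht0 (by ring)
        have heq : xbar + t • (xhat - xbar)
            = (1 - t) • (xbar + (δ/M) • (xhat - x j)) + t • x j := by
          have hMne : M ≠ 0 := ne_of_gt hMpos
          have hδMne : δ + M ≠ 0 := ne_of_gt hδM
          match_scalars <;> rw [ht] <;> field_simp <;> ring
        rw [heq]; exact hmem
      · have heq2 : xhat - (xbar + t • (xhat - xbar)) = (1 - t) • (xhat - xbar) := by
          match_scalars <;> ring
        rw [heq2, norm_smul, Real.norm_eq_abs]
        have h1t : 1 - t = M / (δ + M) := by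
          rw [ht]; field_simp; ring
        rw [h1t, abs_of_nonneg (by positivity)]
        have hdd : M / (δ + M) ≤ M / δ := by
          apply div_le_div_of_nonneg_left hM0 hδ
          linarith
        calc M / (δ + M) * ‖xhat - xbar‖ ≤ M / δ * D :=
              mul_le_mul hdd hxhatbar (norm_nonneg _) (by positivity)
          _ = D * M / δ := by ring
  have hpb : ‖xhat - p‖ ≤ D * M / δ := le_trans (hproj z hz) hzb
  have hm1 : (1:ℝ) ≤ m := by exact_mod_cast hm
  calc ∑ j, ‖x j - p‖
      ≤ ∑ _j : Fin m, (M + D * M / δ) := by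
        apply Finset.sum_le_sum
        intro j _
        calc ‖x j - p‖ ≤ ‖x j - xhat‖ + ‖xhat - p‖ := by
              have := dist_triangle (x j) xhat p
              simpa [dist_eq_norm] using this
          _ ≤ M + D * M / δ := add_le_add (hxhatj j) hpb
    _ = m * (M + D * M / δ) := by
        rw [Finset.sum_const, Finset.card_univ, Fintype.card_fin, nsmul_eq_mul]
    _ ≤ m * (1 + m * D / δ) * M := by
        rw [div_eq_mul_inv, div_eq_mul_inv]
        have hinv : (0:ℝ) ≤ δ⁻¹ := inv_nonneg.mpr hδ.le
        nlinarith [mul_nonneg (mul_nonneg (mul_nonneg hmpos.le (sub_nonneg.mpr hm1))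
          (mul_nonneg hD0 hM0)) hinv]
end

section
/- Let A be an m×m doubly stochastic matrix whose positive entries are all ≥ η > 0, and suppose the graph G with edge {i,j} present whenever A_{ij} > 0 (i ≠ j), together with all self-loops A_{ii} > 0, is connected. Then there exists a spanning tree T of G such that (1/2) ∑_j ∑_ℓ ∑_i A_{ij} A_{iℓ} ‖x_j − x_ℓ‖² ≥ η² ∑_{{s,ℓ} ∈ T} ‖x_s − x_ℓ‖² for all x_1,...,x_m ∈ ℝ^n. -/
open SimpleGraph Finset
open scoped Classical


private lemma reach_mono {V : Type*} {G H : SimpleGraph V}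
    (h : ∀ u v, G.Adj u v → H.Reachable u v) {u v : V} (hr : G.Reachable u v) :
    H.Reachable u v := by
  obtain ⟨w⟩ := hr
  induction w with
  | nil => exact Reachable.refl _
  | cons ha _ ih => exact (h _ _ ha).trans ih

private lemma exists_tree_aux {V : Type*} [Fintype V] :
    ∀ (k : ℕ) (G : SimpleGraph V), G.edgeSet.ncard = k → G.Connected →
      ∃ T, T ≤ G ∧ T.IsTree := by
  intro k
  induction k using Nat.strong_induction_on with
  | _ k ih =>
    intro G hk hc
    by_cases ha : G.IsAcyclic
    · exact ⟨G, le_refl G, ⟨hc, ha⟩⟩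
    · rw [IsAcyclic] at ha
      push_neg at ha
      obtain ⟨v, c, hcyc⟩ := ha
      have hne : c.edges ≠ [] := by
        have h3 := hcyc.three_le_length
        intro h
        have := c.length_edges
        rw [h] at this
        simp at this
        omega
      obtain ⟨e, he⟩ := List.exists_mem_of_ne_nil _ hne
      induction e using Sym2.ind with
      | _ a b =>
        have hreach : G.Adj a b ∧ (G \ fromEdgeSet {s(a, b)}).Reachable a b :=
          (adj_and_reachable_delete_edges_iff_exists_cycle).mpr ⟨v, c, hcyc, he⟩
        set G' : SimpleGraph V := G \ fromEdgeSet {s(a, b)} with hG'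
        have hle : G' ≤ G := sdiff_le
        have hconn' : G'.Connected := by
          haveI : Nonempty V := hc.nonempty
          refine ⟨fun u w => ?_⟩
          refine reach_mono (fun u w huw => ?_) (hc.preconnected u w)
          by_cases hsw : s(u, w) = s(a, b)
          · rw [Sym2.eq_iff] at hsw
            rcases hsw with ⟨rfl, rfl⟩ | ⟨rfl, rfl⟩
            · exact hreach.2
            · exact hreach.2.symm
          · exact Adj.reachable (by
              rw [hG', sdiff_adj]
              exact ⟨huw, fun hadj => hsw ((fromEdgeSet_adj _).mp hadj).1⟩)
        have hedge : G'.edgeSet = G.edgeSet \ {s(a, b)} := by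
          rw [hG', edgeSet_sdiff, edgeSet_fromEdgeSet, edgeSet_sdiff_sdiff_isDiag]
        have hmem : s(a, b) ∈ G.edgeSet := G.mem_edgeSet.mpr hreach.1
        have hfin : G.edgeSet.Finite := Set.toFinite _
        have hlt : G'.edgeSet.ncard < k := by
          rw [hedge, ← hk]
          have : (G.edgeSet \ {s(a, b)}).ncard < G.edgeSet.ncard := by
            apply Set.ncard_lt_ncard _ hfin
            constructor
            · exact Set.diff_subset
            · intro hsub
              exact (hsub hmem).2 rfl
          exact this
        obtain ⟨T, hT, htree⟩ := ih _ hlt G' rfl hconn'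
        exact ⟨T, le_trans hT hle, htree⟩


open scoped Classical in
theorem stmt15 {n m : ℕ} (A : Fin m → Fin m → ℝ) (η : ℝ) (hη : 0 < η)
    (hnonneg : ∀ i j, 0 ≤ A i j)
    (hrow : ∀ i, ∑ j, A i j = 1) (hcol : ∀ j, ∑ i, A i j = 1)
    (hdiag : ∀ i, 0 < A i i)
    (hbound : ∀ i j, 0 < A i j → η ≤ A i j)
    (hconn : (SimpleGraph.fromRel fun i j => 0 < A i j).Connected) :
    ∃ T : SimpleGraph (Fin m),
      T ≤ (SimpleGraph.fromRel fun i j => 0 < A i j) ∧ T.IsTree ∧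
      ∀ x : Fin m → EuclideanSpace ℝ (Fin n),
        η ^ 2 * ∑ e ∈ T.edgeFinset,
            Sym2.lift ⟨fun a b => ‖x a - x b‖ ^ 2, by
              intro a b; simp only []; rw [norm_sub_rev]⟩ e ≤
          (1 / 2) * ∑ j, ∑ l, ∑ i, A i j * A i l * ‖x j - x l‖ ^ 2 := by
  obtain ⟨T, hTle, hTree⟩ :=
    exists_tree_aux ((SimpleGraph.fromRel fun i j => 0 < A i j).edgeSet.ncard)
      (SimpleGraph.fromRel fun i j => 0 < A i j) rfl hconn
  refine ⟨T, hTle, hTree, ?_⟩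
  intro x
  set s : Fin m → Fin m → ℝ := fun a b => ‖x a - x b‖ ^ 2 with hs
  set g : Fin m × Fin m → ℝ := fun p => (∑ i, A i p.1 * A i p.2) * s p.1 p.2 with hg
  have hsnn : ∀ a b, 0 ≤ s a b := fun a b => by positivity
  have hssymm : ∀ a b, s a b = s b a := fun a b => by
    simp only [hs]; rw [norm_sub_rev]
  have hgnn : ∀ p, 0 ≤ g p := fun p =>
    mul_nonneg (Finset.sum_nonneg fun i _ => mul_nonneg (hnonneg _ _) (hnonneg _ _))
      (hsnn _ _)
  have hgswap : ∀ p : Fin m × Fin m, g p.swap = g p := by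
    intro p
    simp only [hg, Prod.fst_swap, Prod.snd_swap]
    rw [hssymm p.2 p.1]
    congr 1
    exact Finset.sum_congr rfl fun i _ => mul_comm _ _
  -- key bound for adjacent pairs
  have hkey : ∀ a b, T.Adj a b → η ^ 2 ≤ ∑ i, A i a * A i b := by
    intro a b hab
    have hG := hTle hab
    rw [SimpleGraph.fromRel_adj] at hG
    have hterm : ∀ i : Fin m, 0 ≤ A i a * A i b := fun i =>
      mul_nonneg (hnonneg _ _) (hnonneg _ _)
    rcases hG.2 with hpos | hpos
    · calc η ^ 2 = η * η := sq η
        _ ≤ A a a * A a b :=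
          mul_le_mul (hbound a a (hdiag a)) (hbound a b hpos) hη.le (hnonneg _ _)
        _ ≤ ∑ i, A i a * A i b :=
          Finset.single_le_sum (fun i _ => hterm i) (Finset.mem_univ a)
    · calc η ^ 2 = η * η := sq η
        _ ≤ A b a * A b b :=
          mul_le_mul (hbound b a hpos) (hbound b b (hdiag b)) hη.le (hnonneg _ _)
        _ ≤ ∑ i, A i a * A i b :=
          Finset.single_le_sum (fun i _ => hterm i) (Finset.mem_univ b)
  -- edges as ordered pairs
  have hout : ∀ e ∈ T.edgeFinset, T.Adj (Quot.out e).1 (Quot.out e).2 := by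
    intro e he
    rw [SimpleGraph.mem_edgeFinset] at he
    have h1 : Sym2.mk (Quot.out e).1 (Quot.out e).2 = e := Quot.out_eq e
    exact (SimpleGraph.mem_edgeSet T).mp (by rw [h1]; exact he)
  have hlift : ∀ e : Sym2 (Fin m),
      Sym2.lift ⟨fun a b => ‖x a - x b‖ ^ 2, by
        intro a b; simp only []; rw [norm_sub_rev]⟩ e = s (Quot.out e).1 (Quot.out e).2 := by
    intro e
    conv_lhs => rw [← Quot.out_eq e]
    rfl
  have hinj : Function.Injective (Quot.out : Sym2 (Fin m) → Fin m × Fin m) := by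
    intro e1 e2 h
    rw [← Quot.out_eq e1, ← Quot.out_eq e2, h]
  have h2 : ∑ e ∈ T.edgeFinset, η ^ 2 * s (Quot.out e).1 (Quot.out e).2 ≤
      ∑ e ∈ T.edgeFinset, g (Quot.out e) := by
    refine Finset.sum_le_sum fun e he => ?_
    exact mul_le_mul_of_nonneg_right (hkey _ _ (hout e he)) (hsnn _ _)
  set S1 : Finset (Fin m × Fin m) := T.edgeFinset.image (fun e => Quot.out e) with hS1
  set S2 : Finset (Fin m × Fin m) := T.edgeFinset.image (fun e => (Quot.out e).swap) with hS2
  have hsum1 : ∑ p ∈ S1, g p = ∑ e ∈ T.edgeFinset, g (Quot.out e) :=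
    Finset.sum_image fun a _ b _ h => hinj h
  have hsum2 : ∑ p ∈ S2, g p = ∑ e ∈ T.edgeFinset, g (Quot.out e) := by
    rw [Finset.sum_image fun a _ b _ h => hinj (Prod.swap_injective h)]
    exact Finset.sum_congr rfl fun e _ => hgswap _
  have hdisj : Disjoint S1 S2 := by
    rw [Finset.disjoint_left]
    rintro p hp1 hp2
    obtain ⟨e1, he1, rfl⟩ := Finset.mem_image.mp hp1
    obtain ⟨e2, he2, heq⟩ := Finset.mem_image.mp hp2
    have : e2 = e1 := by
      rw [← Quot.out_eq e1, ← Quot.out_eq e2, ← heq]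
      exact (Sym2.mk_prod_swap_eq).symm
    subst this
    have hne := (hout e2 he1).ne
    have : (Quot.out e2).1 = (Quot.out e2).2 := by
      have := congrArg Prod.fst heq
      simpa using this.symm
    exact hne this
  have hfull : ∑ j, ∑ l, ∑ i, A i j * A i l * s j l = ∑ p : Fin m × Fin m, g p := by
    rw [← Finset.sum_product']
    refine Finset.sum_congr rfl fun p _ => ?_
    simp only [hg]
    rw [Finset.sum_mul]
  have hsub : ∑ p ∈ S1 ∪ S2, g p ≤ ∑ p : Fin m × Fin m, g p :=
    Finset.sum_le_sum_of_subset_of_nonneg (Finset.subset_univ _)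
      (fun p _ _ => hgnn p)
  rw [Finset.sum_union hdisj, hsum1, hsum2] at hsub
  have hL : η ^ 2 * ∑ e ∈ T.edgeFinset,
      Sym2.lift ⟨fun a b => ‖x a - x b‖ ^ 2, by
        intro a b; simp only []; rw [norm_sub_rev]⟩ e =
      ∑ e ∈ T.edgeFinset, η ^ 2 * s (Quot.out e).1 (Quot.out e).2 := by
    rw [Finset.mul_sum]
    exact Finset.sum_congr rfl fun e _ => by rw [hlift]
  rw [hL, hfull]
  linarith
end
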